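/- Let k, ℓ, n be positive integers with 2^ℓ < k. Then there is no ℓ-bit public-coin SMP perfect simulation of distributions on [k] with n players: for every seed distribution ν on a type U, every family of message maps π_j : U → Fin k → Fin 2^ℓ (j ∈ [n]), and every referee rule δ : U → (Fin n → Fin 2^ℓ) → PMF (Option (Fin k)), there exists a distribution p on [k] and an element x ∈ [k] such that the probability that the referee's output X̂ equals x (when X_1,…,X_n are i.i.d. from p, independent of the seed u ~ ν) differs from p_x. -/

import Mathlib

open scoped BigOperators ENNReal

noncomputable def simOut {k l n : ℕ} {U : Type} (ν : PMF U)
    (π : Fin n → U → Fin k → Fin (2 ^ l))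
    (δ : U → (Fin n → Fin (2 ^ l)) → PMF (Option (Fin k)))
    (p : PMF (Fin k)) (o : Option (Fin k)) : ℝ≥0∞ :=
  ∑' u : U, ν u * ∑ xs : Fin n → Fin k,
    (∏ j : Fin n, p (xs j)) * δ u (fun j => π j u (xs j)) o

section aux

variable {k l n : ℕ} {U : Type} (ν : PMF U)
    (π : Fin n → U → Fin k → Fin (2 ^ l))
    (δ : U → (Fin n → Fin (2 ^ l)) → PMF (Option (Fin k)))

lemma pmf_sum_fin (p : PMF (Fin k)) : ∑ x : Fin k, p x = 1 := by
  rw [← tsum_fintype (L := SummationFilter.unconditional _)]; exact p.tsum_coe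

lemma prod_sum_one (p : PMF (Fin k)) :
    ∑ xs : Fin n → Fin k, ∏ j : Fin n, p (xs j) = 1 := by
  have h := Finset.prod_univ_sum (fun _ : Fin n => (Finset.univ : Finset (Fin k)))
      (fun _ x => p x)
  rw [Fintype.piFinset_univ] at h
  rw [← h]
  simp [pmf_sum_fin]

lemma pmf_option_sum (P : PMF (Option (Fin k))) :
    P none + ∑ x : Fin k, P (some x) = 1 := by
  have := P.tsum_coe
  rw [tsum_fintype, Fintype.sum_option] at this
  exact this

lemma simOut_total (p : PMF (Fin k)) :
    simOut ν π δ p none + ∑ x : Fin k, simOut ν π δ p (some x) = 1 := by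
  unfold simOut
  rw [← Summable.tsum_finsetSum (fun i _ => ENNReal.summable), ← ENNReal.tsum_add]
  have : ∀ u : U,
      (ν u * ∑ xs : Fin n → Fin k, (∏ j : Fin n, p (xs j)) * δ u (fun j => π j u (xs j)) none)
      + ∑ x : Fin k, ν u * ∑ xs : Fin n → Fin k,
          (∏ j : Fin n, p (xs j)) * δ u (fun j => π j u (xs j)) (some x) = ν u := by
    intro u
    rw [← Finset.mul_sum, ← mul_add]
    have : (∑ xs : Fin n → Fin k, (∏ j : Fin n, p (xs j)) * δ u (fun j => π j u (xs j)) none)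
        + ∑ x : Fin k, ∑ xs : Fin n → Fin k,
            (∏ j : Fin n, p (xs j)) * δ u (fun j => π j u (xs j)) (some x) = 1 := by
      rw [Finset.sum_comm]
      rw [← Finset.sum_add_distrib]
      rw [show (1 : ℝ≥0∞) = ∑ xs : Fin n → Fin k, ∏ j : Fin n, p (xs j) from (prod_sum_one p).symm]
      refine Finset.sum_congr rfl fun xs _ => ?_
      rw [← Finset.mul_sum, ← mul_add, pmf_option_sum, mul_one]
    rw [this, mul_one]
  rw [tsum_congr this]
  exact ν.tsum_coe

lemma simOut_zero {p : PMF (Fin k)} {o : Option (Fin k)}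
    (h : simOut ν π δ p o = 0)
    {u : U} (hu : ν u ≠ 0) (xs : Fin n → Fin k)
    (hxs : (∏ j : Fin n, p (xs j)) ≠ 0) :
    δ u (fun j => π j u (xs j)) o = 0 := by
  unfold simOut at h
  rw [ENNReal.tsum_eq_zero] at h
  rcases mul_eq_zero.mp (h u) with h3 | h3
  · exact absurd h3 hu
  · have h4 := (Finset.sum_eq_zero_iff.mp h3) xs (Finset.mem_univ xs)
    rcases mul_eq_zero.mp h4 with h5 | h5
    · exact absurd h5 hxs
    · exact h5

end aux

theorem no_perfect_simulation (k l n : ℕ) (hk : 0 < k) (hl : 0 < l) (hn : 0 < n)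
    (hlt : 2 ^ l < k)
    (U : Type) (ν : PMF U)
    (π : Fin n → U → Fin k → Fin (2 ^ l))
    (δ : U → (Fin n → Fin (2 ^ l)) → PMF (Option (Fin k))) :
    ∃ (p : PMF (Fin k)) (x : Fin k), simOut ν π δ p (some x) ≠ p x := by
  by_contra hcon
  push_neg at hcon
  haveI : Nonempty (Fin k) := ⟨⟨0, hk⟩⟩
  -- a seed with positive probability
  obtain ⟨u, hu⟩ : ∃ u, ν u ≠ 0 := by
    by_contra h
    push_neg at h
    have := ν.tsum_coe
    simp [h] at this
  -- pigeonhole: each player's message map collides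
  have hcol : ∀ j : Fin n, ∃ a b : Fin k, a ≠ b ∧ π j u a = π j u b := by
    intro j
    apply Fintype.exists_ne_map_eq_of_card_lt
    simpa using hlt
  choose a b hab hπ using hcol
  -- the bad message tuple
  set m : Fin n → Fin (2 ^ l) := fun j => π j u (a j) with hm
  -- The referee never outputs ⊥ (probability-0 event), in particular on m.
  have hnone : δ u m none = 0 := by
    set p := PMF.uniformOfFintype (Fin k) with hp
    have hs : ∑ x : Fin k, simOut ν π δ p (some x) = 1 := by
      rw [Finset.sum_congr rfl fun x _ => hcon p x]
      exact pmf_sum_fin p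
    have htot := simOut_total ν π δ p
    rw [hs] at htot
    have h0 : simOut ν π δ p none = 0 := by
      nth_rewrite 2 [← zero_add (1:ℝ≥0∞)] at htot
      exact WithTop.add_right_cancel ENNReal.one_ne_top htot
    have := simOut_zero ν π δ h0 hu a ?_
    · exact this
    · rw [Finset.prod_ne_zero_iff]
      intro j _
      rw [PMF.uniformOfFintype_apply]
      exact ENNReal.inv_ne_zero.mpr (ENNReal.natCast_ne_top _)
  -- The referee never outputs x on message tuple m, for any x.
  have hsome : ∀ x : Fin k, δ u m (some x) = 0 := by
    intro x
    have hne : ({x}ᶜ : Finset (Fin k)).Nonempty := by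
      have h2 : 1 < k := lt_of_le_of_lt Nat.one_le_two_pow hlt
      rw [← Finset.card_pos, Finset.card_compl]
      simp only [Finset.card_singleton, Fintype.card_fin]
      omega
    set p := PMF.uniformOfFinset ({x}ᶜ : Finset (Fin k)) hne with hp
    have hpx : p x = 0 := by
      rw [hp]
      exact PMF.uniformOfFinset_apply_of_notMem hne (Finset.notMem_compl.mpr (Finset.mem_singleton_self x))
    have h0 : simOut ν π δ p (some x) = 0 := (hcon p x).trans hpx
    set xs : Fin n → Fin k := fun j => if a j = x then b j else a j with hxs
    have hxsne : ∀ j, xs j ≠ x := by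
      intro j
      rw [hxs]
      dsimp only
      by_cases hc : a j = x
      · rw [if_pos hc]
        intro hbx
        exact hab j (hc.trans hbx.symm)
      · rw [if_neg hc]
        exact hc
    have hmsg : (fun j => π j u (xs j)) = m := by
      funext j
      rw [hxs, hm]
      dsimp only
      by_cases hc : a j = x
      · rw [if_pos hc, ← hπ j]
      · rw [if_neg hc]
    have := simOut_zero ν π δ h0 hu xs ?_
    · rwa [hmsg] at this
    · rw [Finset.prod_ne_zero_iff]
      intro j _
      rw [hp, PMF.uniformOfFinset_apply]
      rw [if_pos (Finset.mem_compl.mpr (by simp [hxsne j]))]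
      exact ENNReal.inv_ne_zero.mpr (ENNReal.natCast_ne_top _)
  -- contradiction: δ u m has total mass 1 but is zero everywhere
  have hz : ∑' o : Option (Fin k), δ u m o = 0 := by
    rw [ENNReal.tsum_eq_zero]
    rintro (_ | x)
    · exact hnone
    · exact hsome x
  have := (δ u m).tsum_coe
  rw [hz] at this
  exact zero_ne_one this
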